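/- Let G be a finite simple graph on [n] = {1,…,n} such that the complement G^c is a tree and 1,2,…,n is a perfect elimination order of G^c. Then for every k ≥ 0 the k-th homological shift ideal HS_k(I(G)) ⊆ K[x_1,…,x_n] has linear quotients. -/

import Mathlib

open MvPolynomial

/-- An ideal of `K[x_1,…,x_n]` is *generated by variables* if it is the span of the
image of a subset of the variables. -/
def genByVars {K : Type*} [Field K] {n : ℕ} (I : Ideal (MvPolynomial (Fin n) K)) : Prop :=
  ∃ T : Set (Fin n), I = Ideal.span (MvPolynomial.X '' T)
/-- A polynomial is a monomial (with coefficient `1`). -/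
def IsMonomialElt {K : Type*} [Field K] {n : ℕ} (p : MvPolynomial (Fin n) K) : Prop :=
  ∃ a : Fin n →₀ ℕ, p = MvPolynomial.monomial a 1
/-- A monomial ideal has *linear quotients* if its minimal monomial generators admit an
ordering `u 0, u 1, …` such that each colon ideal `(u_0,…,u_{i-1}) : u_i` is generated by a
subset of the variables.  (The conditions that the `u i` are monomials, pairwise
non-dividing, and generate `I` say exactly that they are the minimal monomial generators
of `I`.) -/
def HasLinearQuotients {K : Type*} [Field K] {n : ℕ}
    (I : Ideal (MvPolynomial (Fin n) K)) : Prop :=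
  ∃ (m : ℕ) (u : Fin m → MvPolynomial (Fin n) K),
    (∀ i, IsMonomialElt (u i)) ∧
    (∀ i j, i ≠ j → ¬ u i ∣ u j) ∧
    Ideal.span (Set.range u) = I ∧
    ∀ i : Fin m,
      genByVars ((Ideal.span (u '' {j | j < i})).colon (Ideal.span {u i}))
/-- The natural ordering `1, 2, …, n` of the vertices is a perfect elimination order of
`H`: for each vertex, its neighbourhood among the later vertices is a clique. -/
def natPEO {n : ℕ} (H : SimpleGraph (Fin n)) : Prop :=
  ∀ i j k : Fin n, i < j → i < k → j ≠ k → H.Adj i j → H.Adj i k → H.Adj j k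

/-- The reversed ordering `n, n-1, …, 1` of the vertices is a perfect elimination order of
`H`: for each vertex, its neighbourhood among the earlier-labelled vertices is a clique. -/
def revPEO {n : ℕ} (H : SimpleGraph (Fin n)) : Prop :=
  ∀ i j k : Fin n, j < i → k < i → j ≠ k → H.Adj i j → H.Adj i k → H.Adj j k
/-- The generating monomials of the `k`-th homological shift ideal `HS_k(I(G))`:
all monomials `x_A x_B` with `A, B` nonempty, `max A < min B`, `|A ∪ B| = k + 2` and
`{max A, b} ∈ E(G)` for all `b ∈ B`. -/
def HSgens (K : Type*) [Field K] {n : ℕ} (G : SimpleGraph (Fin n)) (k : ℕ) :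
    Set (MvPolynomial (Fin n) K) :=
  {w | ∃ A B : Finset (Fin n), A.Nonempty ∧ B.Nonempty ∧
    (∀ a ∈ A, ∀ b ∈ B, a < b) ∧ (A ∪ B).card = k + 2 ∧
    (∃ a0 ∈ A, (∀ a ∈ A, a ≤ a0) ∧ ∀ b ∈ B, G.Adj a0 b) ∧
    w = (∏ i ∈ A, MvPolynomial.X i) * ∏ i ∈ B, MvPolynomial.X i}

namespace HSaux

variable {n : ℕ}

/-- `S'` comes strictly before `S` in the lexicographic order. -/
def lexLt (S' S : Finset (Fin n)) : Prop :=
  ∃ t, t ∈ S' ∧ t ∉ S ∧ ∀ x, x < t → (x ∈ S' ↔ x ∈ S)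

/-- Numeric key realizing the (reverse of the) lex order. -/
def fkey (S : Finset (Fin n)) : ℕ := ∑ i ∈ S, 2 ^ (n - 1 - (i : ℕ))

lemma two_pow_sum_lt (R : ℕ) : ∑ j ∈ Finset.range R, 2 ^ j < 2 ^ R := by
  induction R with
  | zero => simp
  | succ R ih => rw [Finset.sum_range_succ, pow_succ]; omega

lemma sum_pow_lt {t : Fin n} (S : Finset (Fin n)) (h : ∀ i ∈ S, t < i) :
    ∑ i ∈ S, 2 ^ (n - 1 - (i : ℕ)) < 2 ^ (n - 1 - (t : ℕ)) := by
  classical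
  have hinj : ∀ i ∈ S, ∀ j ∈ S, n - 1 - (i : ℕ) = n - 1 - (j : ℕ) → i = j := by
    intro i _ j _ hij
    have hi := i.isLt; have hj := j.isLt
    exact Fin.ext (by omega)
  calc ∑ i ∈ S, 2 ^ (n - 1 - (i : ℕ))
      = ∑ j ∈ S.image (fun i : Fin n => n - 1 - (i : ℕ)), 2 ^ j := by
        rw [Finset.sum_image hinj]
    _ ≤ ∑ j ∈ Finset.range (n - 1 - (t : ℕ)), 2 ^ j := by
        apply Finset.sum_le_sum_of_subset
        intro j hj
        simp only [Finset.mem_image] at hj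
        obtain ⟨i, hiS, rfl⟩ := hj
        have h1 : (t : ℕ) < (i : ℕ) := h i hiS
        have h2 := i.isLt
        simp only [Finset.mem_range]
        omega
    _ < 2 ^ (n - 1 - (t : ℕ)) := two_pow_sum_lt _

lemma fkey_lt {S' S : Finset (Fin n)} (h : lexLt S' S) : fkey S < fkey S' := by
  classical
  obtain ⟨t, ht', htS, hag⟩ := h
  have hlow : S.filter (· < t) = S'.filter (· < t) := by
    ext x
    simp only [Finset.mem_filter]
    constructor
    · rintro ⟨hx, hxt⟩; exact ⟨(hag x hxt).2 hx, hxt⟩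
    · rintro ⟨hx, hxt⟩; exact ⟨(hag x hxt).1 hx, hxt⟩
  have hhighS : ∑ i ∈ S.filter (fun i => ¬ i < t), 2 ^ (n - 1 - (i : ℕ))
      < 2 ^ (n - 1 - (t : ℕ)) := by
    apply sum_pow_lt
    intro i hi
    simp only [Finset.mem_filter] at hi
    rcases lt_or_eq_of_le (not_lt.mp hi.2) with h1 | h1
    · exact h1
    · exact absurd (h1 ▸ hi.1) htS
  have hhighS' : 2 ^ (n - 1 - (t : ℕ)) ≤
      ∑ i ∈ S'.filter (fun i => ¬ i < t), 2 ^ (n - 1 - (i : ℕ)) := by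
    apply Finset.single_le_sum (f := fun i : Fin n => 2 ^ (n - 1 - (i : ℕ)))
      (fun i _ => Nat.zero_le _)
    simp [ht']
  have e1 := Finset.sum_filter_add_sum_filter_not S (· < t)
      (fun i : Fin n => 2 ^ (n - 1 - (i : ℕ)))
  have e2 := Finset.sum_filter_add_sum_filter_not S' (· < t)
      (fun i : Fin n => 2 ^ (n - 1 - (i : ℕ)))
  unfold fkey
  rw [← e1, ← e2, hlow]
  omega

lemma lexLt_total {S S' : Finset (Fin n)} (h : S ≠ S') : lexLt S S' ∨ lexLt S' S := by
  classical
  have hne : ((S \ S') ∪ (S' \ S)).Nonempty := by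
    rw [Finset.nonempty_iff_ne_empty]
    intro hemp
    rw [Finset.union_eq_empty, Finset.sdiff_eq_empty_iff_subset,
      Finset.sdiff_eq_empty_iff_subset] at hemp
    exact h (Finset.Subset.antisymm hemp.1 hemp.2)
  set t := ((S \ S') ∪ (S' \ S)).min' hne with ht
  have htmem := ((S \ S') ∪ (S' \ S)).min'_mem hne
  have hag : ∀ x, x < t → (x ∈ S ↔ x ∈ S') := by
    intro x hx
    by_contra hcon
    have hxmem : x ∈ (S \ S') ∪ (S' \ S) := by
      simp only [Finset.mem_union, Finset.mem_sdiff]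
      tauto
    exact absurd (Finset.min'_le _ x hxmem) (not_le.mpr hx)
  rw [Finset.mem_union, Finset.mem_sdiff, Finset.mem_sdiff] at htmem
  rcases htmem with ⟨h1, h2⟩ | ⟨h1, h2⟩
  · exact Or.inl ⟨t, h1, h2, hag⟩
  · exact Or.inr ⟨t, h1, h2, fun x hx => (hag x hx).symm⟩

lemma fkey_injective : Function.Injective (fkey (n := n)) := by
  intro S S' hf
  by_contra hne
  rcases lexLt_total hne with h | h
  · have := fkey_lt h; omega
  · have := fkey_lt h; omega


/-- `S` is a generator set for `HS_k`, relative to a parent function `p`. -/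
def IsGen (p : Fin n → ℕ) (k : ℕ) (S : Finset (Fin n)) : Prop :=
  S.card = k + 2 ∧ ∃ a ∈ S, (∃ b ∈ S, a < b) ∧ ∀ b ∈ S, (b : ℕ) ≠ p a

lemma exchange {p : Fin n → ℕ} (hp : ∀ i : Fin n, (i : ℕ) < p i) {k : ℕ}
    {S' S : Finset (Fin n)} (hS' : IsGen p k S') (hS : IsGen p k S)
    (hlt : lexLt S' S) :
    ∃ t, t ∈ S' ∧ t ∉ S ∧ ∃ S'', IsGen p k S'' ∧ S'' ⊆ insert t S ∧ lexLt S'' S := by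
  classical
  obtain ⟨t, htS', htS, hag⟩ := hlt
  -- there is an element of S above t
  have hub : ∃ b ∈ S, t < b := by
    by_contra hcon
    push_neg at hcon
    have hsub : S ⊆ S' := by
      intro x hx
      have hxt : x < t := lt_of_le_of_ne (hcon x hx) (fun h => htS (h ▸ hx))
      exact (hag x hxt).2 hx
    have : S = S' := Finset.eq_of_subset_of_card_le hsub (by rw [hS'.1, hS.1])
    exact htS (this ▸ htS')
  -- choose the element `s` to remove
  have hs : ∃ s ∈ S, t < s ∧ ((∃ x ∈ S, (x : ℕ) = p t) → (s : ℕ) = p t) := by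
    by_cases hpt : ∃ x ∈ S, (x : ℕ) = p t
    · obtain ⟨s, hsS, hsv⟩ := hpt
      refine ⟨s, hsS, ?_, fun _ => hsv⟩
      have := hp t
      exact Fin.lt_def.mpr (by omega)
    · obtain ⟨b, hbS, hb⟩ := hub
      exact ⟨b, hbS, hb, fun h => absurd h hpt⟩
  obtain ⟨s, hsS, hts, hsp⟩ := hs
  set S'' := insert t (S.erase s) with hS''def
  have htnotin : t ∉ S.erase s := fun h => htS (Finset.mem_of_mem_erase h)
  have hcard'' : S''.card = k + 2 := by
    rw [hS''def, Finset.card_insert_of_notMem htnotin,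
      Finset.card_erase_of_mem hsS, hS.1]
    omega
  have hsub'' : S'' ⊆ insert t S := by
    intro x hx
    rcases Finset.mem_insert.mp hx with rfl | hx
    · exact Finset.mem_insert_self _ _
    · exact Finset.mem_insert_of_mem (Finset.mem_of_mem_erase hx)
  have hlex'' : lexLt S'' S := by
    refine ⟨t, Finset.mem_insert_self _ _, htS, fun x hx => ?_⟩
    have hxt : x ≠ t := ne_of_lt hx
    have hxs : x ≠ s := ne_of_lt (lt_trans hx hts)
    simp [hS''def, Finset.mem_insert, Finset.mem_erase, hxt, hxs]
  by_cases hcase : ∃ b ∈ S'', t < b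
  · -- witness a := t
    refine ⟨t, htS', htS, S'', ⟨hcard'', t, Finset.mem_insert_self _ _, hcase, ?_⟩,
      hsub'', hlex''⟩
    intro b hb
    rcases Finset.mem_insert.mp hb with rfl | hb
    · exact Nat.ne_of_lt (hp b)
    · intro hbv
      have hbS : b ∈ S := Finset.mem_of_mem_erase hb
      have hbs : b ≠ s := (Finset.mem_erase.mp hb).1
      have : (s : ℕ) = p t := hsp ⟨b, hbS, hbv⟩
      exact hbs (Fin.ext (by omega))
  · -- then S'' = S'
    push_neg at hcase
    have heq : S'' = S' := by
      apply Finset.eq_of_subset_of_card_le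
      · intro x hx
        rcases Finset.mem_insert.mp hx with rfl | hx'
        · exact htS'
        · have hxS : x ∈ S := Finset.mem_of_mem_erase hx'
          have hxle : x ≤ t := hcase x hx
          have hxt : x ≠ t := fun h => htS (h ▸ hxS)
          have : x < t := lt_of_le_of_ne hxle hxt
          exact (hag x this).2 hxS
      · rw [hS'.1, hcard'']
    exact ⟨t, htS', htS, S'', heq ▸ hS', hsub'', hlex''⟩

/-- Exponent vector of a squarefree set. -/
noncomputable def ee (S : Finset (Fin n)) : (Fin n) →₀ ℕ := ∑ i ∈ S, Finsupp.single i 1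

lemma ee_apply (S : Finset (Fin n)) (j : Fin n) :
    ee S j = if j ∈ S then 1 else 0 := by
  classical
  rw [ee, Finsupp.finset_sum_apply]
  simp [Finsupp.single_apply]

lemma ee_insert {t : Fin n} {S : Finset (Fin n)} (h : t ∉ S) :
    ee (insert t S) = Finsupp.single t 1 + ee S := by
  rw [ee, ee, Finset.sum_insert h]

lemma ee_union {A B : Finset (Fin n)} (h : Disjoint A B) :
    ee (A ∪ B) = ee A + ee B := by
  rw [ee, ee, ee, Finset.sum_union h]

lemma ee_le_ee_iff {A B : Finset (Fin n)} : ee A ≤ ee B ↔ A ⊆ B := by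
  classical
  rw [Finsupp.le_def]
  constructor
  · intro h x hx
    have := h x
    rw [ee_apply, ee_apply, if_pos hx] at this
    by_contra hxB
    rw [if_neg hxB] at this
    omega
  · intro h x
    rw [ee_apply, ee_apply]
    by_cases hx : x ∈ A
    · rw [if_pos hx, if_pos (h hx)]
    · rw [if_neg hx]; omega

lemma prod_X_eq {K : Type*} [Field K] (S : Finset (Fin n)) :
    (∏ i ∈ S, (X i : MvPolynomial (Fin n) K)) = monomial (ee S) 1 := by
  classical
  induction S using Finset.induction_on with
  | empty => simp [ee, monomial_zero']
  | @insert a s h ih =>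
    rw [Finset.prod_insert h, ih, ee_insert h]
    have hX : (X a : MvPolynomial (Fin n) K) = monomial (Finsupp.single a 1) 1 := rfl
    rw [hX, monomial_mul, one_mul]


lemma no_triangle {H : SimpleGraph (Fin n)} (hac : H.IsAcyclic) {a b c : Fin n}
    (hab : H.Adj a b) (hbc : H.Adj b c) (hca : H.Adj c a) : False := by
  classical
  have hac2 : H.Adj a c := hca.symm
  have hw : (SimpleGraph.Walk.cons hab (SimpleGraph.Walk.cons hbc .nil)).IsPath := by
    rw [SimpleGraph.Walk.isPath_def]
    simp only [SimpleGraph.Walk.support_cons, SimpleGraph.Walk.support_nil]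
    refine List.nodup_cons.mpr ⟨?_, List.nodup_cons.mpr ⟨?_, List.nodup_singleton _⟩⟩
    · simp only [List.mem_cons, List.mem_singleton]
      rintro (rfl | rfl | h)
      · exact hab.ne rfl
      · exact hac2.ne rfl
      · exact (List.not_mem_nil h)
    · simp only [List.mem_singleton]
      intro h
      exact hbc.ne h
  have heq := hac.path_unique ⟨_, hw⟩ (SimpleGraph.Path.singleton hac2)
  have hlen := congrArg (fun p : H.Path a c => p.1.length) heq
  simp [SimpleGraph.Path.singleton] at hlen

lemma upper_unique {H : SimpleGraph (Fin n)} (hac : H.IsAcyclic) (hPEO : natPEO H)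
    {i j k : Fin n} (hij : i < j) (hik : i < k) (haj : H.Adj i j) (hak : H.Adj i k) :
    j = k := by
  by_contra hne
  exact no_triangle hac haj (hPEO i j k hij hik hne haj hak) hak.symm

open Classical in
/-- Parent function: the unique upper neighbour in `H` (as a natural number),
or `n` if there is none. -/
noncomputable def par (H : SimpleGraph (Fin n)) (i : Fin n) : ℕ :=
  if h : ∃ j, i < j ∧ H.Adj i j then (h.choose : ℕ) else n

lemma par_gt (H : SimpleGraph (Fin n)) (i : Fin n) : (i : ℕ) < par H i := by
  rw [par]
  split_ifs with h
  · exact h.choose_spec.1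
  · exact i.isLt

lemma par_adj_iff {H : SimpleGraph (Fin n)} (hac : H.IsAcyclic) (hPEO : natPEO H)
    {i j : Fin n} (hij : i < j) : H.Adj i j ↔ (j : ℕ) = par H i := by
  constructor
  · intro hadj
    have h : ∃ j, i < j ∧ H.Adj i j := ⟨j, hij, hadj⟩
    rw [par, dif_pos h]
    exact congrArg Fin.val (upper_unique hac hPEO hij h.choose_spec.1 hadj h.choose_spec.2)
  · intro hv
    rw [par] at hv
    split_ifs at hv with h
    · have : j = h.choose := Fin.ext hv
      rw [this]
      exact h.choose_spec.2
    · exact absurd hv (Nat.ne_of_lt j.isLt)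

theorem main_abstract {K : Type*} [Field K] (p : Fin n → ℕ)
    (hp : ∀ i : Fin n, (i : ℕ) < p i) (k : ℕ) :
    HasLinearQuotients
      (Ideal.span ((fun S => monomial (ee S) (1 : K)) '' {S | IsGen p k S})) := by
  classical
  set F : Finset (Finset (Fin n)) := Finset.univ.filter (fun S => IsGen p k S) with hF
  have hFmem : ∀ S, S ∈ F ↔ IsGen p k S := by intro S; simp [hF]
  let r : Finset (Fin n) → Finset (Fin n) → Prop := fun S S' => fkey S' ≤ fkey S
  haveI hdec : DecidableRel r := fun S S' => inferInstanceAs (Decidable (_ ≤ _))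
  haveI : IsTrans (Finset (Fin n)) r := ⟨fun a b c h1 h2 => le_trans h2 h1⟩
  haveI : IsAntisymm (Finset (Fin n)) r :=
    ⟨fun a b h1 h2 => fkey_injective (le_antisymm h2 h1)⟩
  haveI : IsTotal (Finset (Fin n)) r := ⟨fun a b => le_total (fkey b) (fkey a)⟩
  set L : List (Finset (Fin n)) := F.sort r with hL
  have hLsorted : L.Pairwise r := Finset.pairwise_sort F r
  have hLnodup : L.Nodup := Finset.sort_nodup F r
  have hLmem : ∀ S, S ∈ L ↔ IsGen p k S := by
    intro S; rw [hL, Finset.mem_sort]; exact hFmem S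
  have hmem : ∀ i : Fin L.length, IsGen p k (L.get i) :=
    fun i => (hLmem _).mp (List.get_mem L i)
  have hgetinj : ∀ i j : Fin L.length, L.get i = L.get j → i = j :=
    fun i j h => (List.Nodup.get_inj_iff hLnodup).mp h
  have horder : ∀ i j : Fin L.length, j < i → lexLt (L.get j) (L.get i) := by
    intro i j hji
    have hr : r (L.get j) (L.get i) := hLsorted.rel_get_of_lt hji
    have hne : L.get j ≠ L.get i := fun h => (ne_of_lt hji) (hgetinj j i h)
    rcases lexLt_total hne with h | h
    · exact h
    · exact absurd (fkey_lt h) (not_lt.mpr hr)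
  have hfind : ∀ (i : Fin L.length) (S'' : Finset (Fin n)), IsGen p k S'' →
      lexLt S'' (L.get i) → ∃ l : Fin L.length, l < i ∧ L.get l = S'' := by
    intro i S'' hgen hlex
    have hmemL : S'' ∈ L := (hLmem S'').mpr hgen
    obtain ⟨l, hl⟩ := List.mem_iff_get.mp hmemL
    rcases lt_trichotomy l i with h | h | h
    · exact ⟨l, h, hl⟩
    · exfalso
      obtain ⟨t, ht1, ht2, _⟩ := hlex
      rw [← h, hl] at ht2
      exact ht2 ht1
    · exfalso
      have hr : r (L.get i) (L.get l) := hLsorted.rel_get_of_lt h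
      rw [hl] at hr
      exact absurd (fkey_lt hlex) (not_lt.mpr hr)
  refine ⟨L.length, fun i => monomial (ee (L.get i)) (1 : K), fun i => ⟨_, rfl⟩, ?_, ?_, ?_⟩
  · -- non-divisibility
    intro i j hij hdvd
    rw [monomial_dvd_monomial] at hdvd
    rcases hdvd.1 with h | h
    · exact one_ne_zero h
    · have hsub : L.get i ⊆ L.get j := ee_le_ee_iff.mp h
      have : L.get i = L.get j :=
        Finset.eq_of_subset_of_card_le hsub (by rw [(hmem i).1, (hmem j).1])
      exact hij (hgetinj i j this)
  · -- spans agree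
    congr 1
    ext w
    constructor
    · rintro ⟨i, rfl⟩
      exact ⟨L.get i, hmem i, rfl⟩
    · rintro ⟨S, hS, rfl⟩
      obtain ⟨l, hl⟩ := List.mem_iff_get.mp ((hLmem S).mpr hS)
      exact ⟨l, by simp only [hl]⟩
  · -- colon ideals
    intro i
    set Si := L.get i with hSi
    refine ⟨{t | t ∉ Si ∧ ∃ l : Fin L.length, l < i ∧ L.get l ⊆ insert t Si}, ?_⟩
    apply le_antisymm
    · intro f hf
      rw [Ideal.mem_colon_span_singleton] at hf
      have hJ : ((fun i : Fin L.length => monomial (ee (L.get i)) (1 : K)) '' {j | j < i})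
          = (fun s => monomial s (1 : K)) ''
            ((fun j : Fin L.length => ee (L.get j)) '' {j | j < i}) := by
        rw [Set.image_image]
      rw [hJ, mem_ideal_span_monomial_image] at hf
      rw [mem_ideal_span_X_image]
      intro μ hμ
      have hcoeff : coeff (μ + ee Si) (f * monomial (ee Si) (1 : K)) = coeff μ f := by
        rw [coeff_mul_monomial, mul_one]
      have hξ : (μ + ee Si) ∈ (f * monomial (ee Si) (1 : K)).support :=
        mem_support_iff.mpr (by rw [hcoeff]; exact mem_support_iff.mp hμ)
      obtain ⟨si, hsi, hle⟩ := hf _ hξ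
      obtain ⟨j, hj, rfl⟩ := hsi
      have hlex := horder i j hj
      obtain ⟨t, htj, hti, S'', hgen'', hsub'', hlex''⟩ :=
        exchange hp (hmem j) (hmem i) hlex
      obtain ⟨l, hl, hgl⟩ := hfind i S'' hgen'' hlex''
      refine ⟨t, ⟨hti, l, hl, by rw [hgl]; exact hsub''⟩, ?_⟩
      have h1 := hle t
      rw [Finsupp.add_apply, ee_apply, ee_apply, if_pos htj, if_neg hti] at h1
      omega
    · rw [Ideal.span_le]
      rintro w ⟨t, ht, rfl⟩
      rw [SetLike.mem_coe, Ideal.mem_colon_span_singleton]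
      obtain ⟨hti, l, hl, hsub⟩ := ht
      have hXt : (X t : MvPolynomial (Fin n) K) * monomial (ee Si) 1
          = monomial (ee (insert t Si)) 1 := by
        have : (X t : MvPolynomial (Fin n) K) = monomial (Finsupp.single t 1) 1 := rfl
        rw [this, monomial_mul, one_mul, ee_insert hti]
      rw [hXt]
      have hdisj : Disjoint (L.get l) (insert t Si \ L.get l) := Finset.disjoint_sdiff
      have hunion : L.get l ∪ (insert t Si \ L.get l) = insert t Si :=
        Finset.union_sdiff_of_subset hsub
      have hfac : monomial (ee (insert t Si)) (1 : K)
          = monomial (ee (L.get l)) 1 * monomial (ee (insert t Si \ L.get l)) 1 := by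
        rw [monomial_mul, one_mul, ← ee_union hdisj, hunion]
      rw [hfac]
      exact Ideal.mul_mem_right _ _ (Ideal.subset_span ⟨l, hl, rfl⟩)

theorem HSgens_eq {K : Type*} [Field K] (G : SimpleGraph (Fin n))
    (hac : Gᶜ.IsAcyclic) (hPEO : natPEO Gᶜ) (k : ℕ) :
    HSgens K G k = (fun S => monomial (ee S) (1 : K)) '' {S | IsGen (par Gᶜ) k S} := by
  classical
  ext w
  constructor
  · rintro ⟨A, B, hA, hB, hAB, hcard, ⟨a0, ha0A, ha0max, ha0adj⟩, rfl⟩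
    have hdisj : Disjoint A B := by
      rw [Finset.disjoint_left]
      intro x hxA hxB
      exact absurd (hAB x hxA x hxB) (lt_irrefl x)
    refine ⟨A ∪ B, ⟨hcard, a0, Finset.mem_union_left _ ha0A, ?_, ?_⟩, ?_⟩
    · obtain ⟨b, hb⟩ := hB
      exact ⟨b, Finset.mem_union_right _ hb, hAB a0 ha0A b hb⟩
    · intro b hb
      rcases Finset.mem_union.mp hb with hbA | hbB
      · have h1 : (b : ℕ) ≤ (a0 : ℕ) := ha0max b hbA
        have h2 := par_gt Gᶜ a0
        omega
      · intro hbv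
        have hab : a0 < b := hAB a0 ha0A b hbB
        have : Gᶜ.Adj a0 b := (par_adj_iff hac hPEO hab).mpr hbv
        rw [G.compl_adj] at this
        exact this.2 (ha0adj b hbB)
    · rw [← Finset.prod_union hdisj, prod_X_eq]
  · rintro ⟨S, ⟨hcard, a, haS, ⟨b0, hb0S, hab0⟩, hpa⟩, rfl⟩
    set A := S.filter (fun x => x ≤ a) with hA
    set B := S.filter (fun x => a < x) with hB
    have hunion : A ∪ B = S := by
      ext x
      simp only [hA, hB, Finset.mem_union, Finset.mem_filter]
      constructor
      · rintro (⟨h, _⟩ | ⟨h, _⟩) <;> exact h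
      · intro h
        rcases le_or_gt x a with h1 | h1
        · exact Or.inl ⟨h, h1⟩
        · exact Or.inr ⟨h, h1⟩
    have hdisj : Disjoint A B := by
      rw [Finset.disjoint_left]
      intro x hxA hxB
      rw [hA, Finset.mem_filter] at hxA
      rw [hB, Finset.mem_filter] at hxB
      exact absurd (lt_of_le_of_lt hxA.2 hxB.2) (lt_irrefl x)
    refine ⟨A, B, ⟨a, by simp [hA, haS]⟩, ⟨b0, by simp [hB, hb0S, hab0]⟩, ?_, ?_,
      ⟨a, by simp [hA, haS], fun x hx => (Finset.mem_filter.mp hx).2, ?_⟩, ?_⟩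
    · intro x hx y hy
      exact lt_of_le_of_lt (Finset.mem_filter.mp hx).2 (Finset.mem_filter.mp hy).2
    · rw [hunion]; exact hcard
    · intro b hb
      rw [hB, Finset.mem_filter] at hb
      have hne : ¬ Gᶜ.Adj a b := by
        intro hadj
        exact hpa b hb.1 ((par_adj_iff hac hPEO hb.2).mp hadj)
      by_contra hG
      exact hne ((G.compl_adj a b).mpr ⟨ne_of_lt hb.2, hG⟩)
    · rw [← Finset.prod_union hdisj, prod_X_eq, hunion]

end HSaux

/-- **Corollary 3.3 (Ficarra–Herzog).**  Let `G` be a graph on `Fin n` such that `Gᶜ` is a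
tree and the natural order is a perfect elimination order of `Gᶜ`.  Then every
homological shift ideal `HS_k(I(G))` has linear quotients. -/
theorem HS_k_linearQuotients_of_tree_complement
    {K : Type*} [Field K] {n : ℕ} (G : SimpleGraph (Fin n))
    (htree : Gᶜ.IsTree)
    (hPEO : natPEO Gᶜ) :
    ∀ k : ℕ, HasLinearQuotients (Ideal.span (HSgens K G k)) := by
  intro k
  rw [HSaux.HSgens_eq G htree.IsAcyclic hPEO k]
  exact HSaux.main_abstract _ (HSaux.par_gt _) k
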